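/- For every tree T=(V,E,ω) with a down-monotonic and rounded cost function, there exists an optimal extended strategy function for (T,ω) that is aligned. -/

import Mathlib

universe u

/-- A half-open interval `[a, b)` with integer endpoints `0 ≤ a < b`. -/
structure HInterval : Type where
  a : ℕ
  b : ℕ
  hab : a < b

namespace HInterval

/-- The interval `[a, b)` as a set of naturals. -/
def toSet (I : HInterval) : Set ℕ := Set.Ico I.a I.b

/-- The length `|[a,b)| = b - a` of an interval. -/
def len (I : HInterval) : ℕ := I.b - I.a

/-- `I < J` for intervals `I = [a,b)`, `J = [a',b')`: it means `b ≤ a'`. -/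
def Lt (I J : HInterval) : Prop := I.b ≤ J.a

/-- `K > I ∪ J`: the interval `K` lies entirely above both `I` and `J`. -/
def GtUnion (K I J : HInterval) : Prop := I.b ≤ K.a ∧ J.b ≤ K.a

/-- The interval shifted by a constant `c`, i.e. `[a+c, b+c)`. -/
def shift (I : HInterval) (c : ℕ) : HInterval :=
  ⟨I.a + c, I.b + c, by have := I.hab; omega⟩

end HInterval

variable {V : Type u}

/-- `v` lies on the path between `r` and `u` in `G` (when `G` is a tree,
the path between any two vertices is unique). -/
def OnPath (G : SimpleGraph V) (r u v : V) : Prop :=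
  ∀ p : G.Walk r u, p.IsPath → v ∈ p.support

/-- An extended strategy function for `(G, ω)`: it assigns to each vertex `v` an
interval of length at least `ω v` such that, whenever the intervals of two distinct
vertices intersect, the path connecting them contains a vertex whose interval lies
above the union of the two intervals. -/
def IsESF (G : SimpleGraph V) (ω : V → ℝ) (f : V → HInterval) : Prop :=
  (∀ v, ω v ≤ ((f v).len : ℝ)) ∧
  ∀ v₁ v₂ : V, v₁ ≠ v₂ → ((f v₁).toSet ∩ (f v₂).toSet).Nonempty →
    ∀ p : G.Walk v₁ v₂, p.IsPath →
      ∃ v₃ ∈ p.support, (f v₃).GtUnion (f v₁) (f v₂)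

/-- `sup ⋃_{v ∈ V} f(v)`: the supremum of the union of all assigned intervals. -/
noncomputable def supEnd [Fintype V] (f : V → HInterval) : ℕ :=
  Finset.univ.sup fun v => (f v).b

/-- An extended strategy function is optimal if the supremum of the union of its
intervals is minimal among all extended strategy functions for `(G, ω)`. -/
def IsOptimalESF [Fintype V] (G : SimpleGraph V) (ω : V → ℝ) (f : V → HInterval) : Prop :=
  IsESF G ω f ∧ ∀ g : V → HInterval, IsESF G ω g → supEnd f ≤ supEnd g

/-- `u` is screening `v`: `u` is the only vertex `x` on the path connecting `v`
and `u` with `f v < f x`. -/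
def Screens (G : SimpleGraph V) (f : V → HInterval) (v u : V) : Prop :=
  ∀ p : G.Walk v u, p.IsPath → ∀ x ∈ p.support, ((f v).Lt (f x) ↔ x = u)

/-- `u` belongs to the screening neighborhood `N(v)` of `v`: `u` is `v` itself, or
`u` is screening `v`, or the path connecting `u` and `v` has no vertex screening `v`. -/
def InScrNbhd (G : SimpleGraph V) (f : V → HInterval) (v u : V) : Prop :=
  u = v ∨ Screens G f v u ∨
    ∀ p : G.Walk u v, p.IsPath → ∀ x ∈ p.support, ¬ Screens G f v x

/-- `u` is visible from `v`: no vertex `x` on the path connecting `u` and `v`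
satisfies `f u < f x`. -/
def Visible (G : SimpleGraph V) (f : V → HInterval) (u v : V) : Prop :=
  ∀ p : G.Walk u v, p.IsPath → ∀ x ∈ p.support, ¬ (f u).Lt (f x)

/-- The vertex `u` is aligned w.r.t. `f` and `ω` if both endpoints of `f u`
are integer multiples of `ω u`. -/
def AlignedAt (ω : V → ℝ) (f : V → HInterval) (u : V) : Prop :=
  (∃ m : ℕ, ((f u).a : ℝ) = m * ω u) ∧ (∃ m : ℕ, ((f u).b : ℝ) = m * ω u)

/-- An extended strategy function on the subgraph of `G` induced by the vertex set `A`. -/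
def IsESFOn (G : SimpleGraph V) (ω : V → ℝ) (f : V → HInterval) (A : Set V) : Prop :=
  (∀ v ∈ A, ω v ≤ ((f v).len : ℝ)) ∧
  ∀ v₁ ∈ A, ∀ v₂ ∈ A, v₁ ≠ v₂ → ((f v₁).toSet ∩ (f v₂).toSet).Nonempty →
    ∀ p : G.Walk v₁ v₂, p.IsPath → (∀ x ∈ p.support, x ∈ A) →
      ∃ v₃ ∈ p.support, (f v₃).GtUnion (f v₁) (f v₂)







namespace Stmt14Aux

open SimpleGraph

attribute [local instance] Classical.propDecidable

variable {V : Type u} {G : SimpleGraph V}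

noncomputable def pth (hG : G.IsTree) (x y : V) : G.Walk x y :=
  (hG.existsUnique_path x y).choose

lemma pth_isPath (hG : G.IsTree) (x y : V) : (pth hG x y).IsPath :=
  (hG.existsUnique_path x y).choose_spec.1

lemma pth_eq (hG : G.IsTree) {x y : V} (p : G.Walk x y) (hp : p.IsPath) :
    p = pth hG x y :=
  (hG.existsUnique_path x y).choose_spec.2 p hp

lemma start_mem_pth (hG : G.IsTree) (x y : V) : x ∈ (pth hG x y).support :=
  Walk.start_mem_support _

lemma end_mem_pth (hG : G.IsTree) (x y : V) : y ∈ (pth hG x y).support :=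
  Walk.end_mem_support _

lemma mem_pth_self (hG : G.IsTree) {x z : V} : z ∈ (pth hG x x).support ↔ z = x := by
  have h : (Walk.nil : G.Walk x x) = pth hG x x := pth_eq hG _ Walk.IsPath.nil
  rw [← h, Walk.support_nil, List.mem_singleton]

lemma mem_pth_symm (hG : G.IsTree) {x y z : V} (h : z ∈ (pth hG x y).support) :
    z ∈ (pth hG y x).support := by
  have h2 : (pth hG x y).reverse = pth hG y x :=
    pth_eq hG _ ((pth_isPath hG x y).reverse)
  rw [← h2, Walk.support_reverse, List.mem_reverse]
  exact h

/-- master triangle lemma -/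
lemma mem_pth_triangle (hG : G.IsTree) {x w z : V} (y : V) (h : z ∈ (pth hG x w).support) :
    z ∈ (pth hG x y).support ∨ z ∈ (pth hG y w).support := by
  have hbp : ((pth hG x y).append (pth hG y w)).bypass = pth hG x w :=
    pth_eq hG _ (Walk.bypass_isPath _)
  have h2 : z ∈ ((pth hG x y).append (pth hG y w)).support := by
    apply Walk.support_bypass_subset
    rw [hbp]; exact h
  exact (Walk.mem_support_append_iff _ _).mp h2

lemma pth_takeUntil_eq (hG : G.IsTree) {x y u : V} (h : u ∈ (pth hG x y).support) :
    (pth hG x y).takeUntil u h = pth hG x u :=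
  pth_eq hG _ ((pth_isPath hG x y).takeUntil h)

lemma pth_dropUntil_eq (hG : G.IsTree) {x y u : V} (h : u ∈ (pth hG x y).support) :
    (pth hG x y).dropUntil u h = pth hG u y :=
  pth_eq hG _ ((pth_isPath hG x y).dropUntil h)

lemma mem_pth_left (hG : G.IsTree) {x y u z : V} (h : u ∈ (pth hG x y).support)
    (hz : z ∈ (pth hG x u).support) : z ∈ (pth hG x y).support := by
  rw [← pth_takeUntil_eq hG h] at hz
  exact Walk.support_takeUntil_subset _ h hz

lemma mem_pth_right (hG : G.IsTree) {x y u z : V} (h : u ∈ (pth hG x y).support)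
    (hz : z ∈ (pth hG u y).support) : z ∈ (pth hG x y).support := by
  rw [← pth_dropUntil_eq hG h] at hz
  exact Walk.support_dropUntil_subset _ h hz

lemma mem_pth_split (hG : G.IsTree) {x y u z : V} (h : u ∈ (pth hG x y).support)
    (hz : z ∈ (pth hG x y).support) :
    z ∈ (pth hG x u).support ∨ z ∈ (pth hG u y).support := by
  rw [← Walk.take_spec (pth hG x y) h, Walk.mem_support_append_iff] at hz
  rw [← pth_takeUntil_eq hG h, ← pth_dropUntil_eq hG h]
  exact hz

lemma no_cross (hG : G.IsTree) {u w y : V} (hne : u ≠ w)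
    (h1 : w ∈ (pth hG u y).support) (h2 : u ∈ (pth hG w y).support) : False := by
  -- u appears twice in pth w y : as start, and inside (pth u y) which is the dropUntil at... 
  -- use: pth w y splits at u; w in (pth u y).support, w ≠ u means w in tail; 
  have hsplit := Walk.take_spec (pth hG w y) h2
  have hnodup := (pth_isPath hG w y).support_nodup
  rw [← hsplit, Walk.support_append, List.nodup_append] at hnodup
  have hw1 : w ∈ ((pth hG w y).takeUntil u h2).support := by
    rw [pth_takeUntil_eq hG h2]; exact start_mem_pth hG w u
  have hw2 : w ∈ ((pth hG w y).dropUntil u h2).support.tail := by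
    rw [pth_dropUntil_eq hG h2]
    have hcons := Walk.support_eq_cons (pth hG u y)
    rw [hcons] at h1
    rcases List.mem_cons.mp h1 with h | h
    · exact absurd h.symm hne
    · exact h
  exact hnodup.2.2 w hw1 w hw2 rfl

lemma pth_cons (hG : G.IsTree) {u c y : V} (hadj : G.Adj u c)
    (hn : u ∉ (pth hG c y).support) :
    pth hG u y = Walk.cons hadj (pth hG c y) :=
  (pth_eq hG _ ((Walk.cons_isPath_iff hadj _).2 ⟨pth_isPath hG c y, hn⟩)).symm

/-- second vertex of a nontrivial path -/
lemma exists_second_vertex (hG : G.IsTree) {u x : V} (hne : u ≠ x) :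
    ∃ c, G.Adj u c ∧ u ∉ (pth hG c x).support ∧
      ∀ z ∈ (pth hG c x).support, z ∈ (pth hG u x).support := by
  cases hp : pth hG u x with
  | nil => exact absurd rfl hne
  | @cons _ c _ hadj q =>
    have hpath : (Walk.cons hadj q).IsPath := by rw [← hp]; exact pth_isPath hG u x
    rw [Walk.cons_isPath_iff] at hpath
    have hq : q = pth hG c x := pth_eq hG q hpath.1
    refine ⟨c, hadj, by rw [← hq]; exact hpath.2, fun z hz => ?_⟩
    rw [← hq] at hz
    rw [Walk.support_cons]
    exact List.mem_cons_of_mem _ hz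



open SimpleGraph

variable {G : SimpleGraph V}

section ESF

variable (G) (ω : V → ℝ) (k : V → ℕ)

/-- sup of right endpoints over a finite vertex set -/
noncomputable def supE (A : Finset V) (f : V → HInterval) : ℕ :=
  A.sup fun v => (f v).b

noncomputable def OPT (A : Finset V) : ℕ :=
  sInf {n | ∃ f, IsESFOn G ω f ↑A ∧ supE A f = n}

variable {G ω k}

lemma inter_nonempty_iff {I J : HInterval} :
    (I.toSet ∩ J.toSet).Nonempty ↔ ¬(I.b ≤ J.a ∨ J.b ≤ I.a) := by
  have hI := I.hab; have hJ := J.hab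
  unfold HInterval.toSet
  rw [Set.Ico_inter_Ico, Set.nonempty_Ico, lt_inf_iff, sup_lt_iff, sup_lt_iff]
  omega

lemma cast_two_pow (hωk : ∀ v, ω v = (2:ℝ) ^ (k v)) (v : V) :
    ((2 ^ (k v) : ℕ) : ℝ) = ω v := by
  rw [hωk]; push_cast; ring

lemma len_ge (hωk : ∀ v, ω v = (2:ℝ) ^ (k v)) {f : V → HInterval} {v : V}
    (h : ω v ≤ ((f v).len : ℝ)) : (f v).a + 2 ^ (k v) ≤ (f v).b := by
  have h3 : 2 ^ (k v) ≤ (f v).len := by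
    have h2 : ((2:ℝ)) ^ (k v) ≤ ((f v).len : ℝ) := (hωk v) ▸ h
    exact_mod_cast h2
  have := (f v).hab
  unfold HInterval.len at h3
  omega

lemma exists_esf (hωk : ∀ v, ω v = (2:ℝ) ^ (k v)) (A : Finset V) :
    ∃ f, IsESFOn G ω f ↑A := by
  suffices h : ∃ f : V → HInterval, (∀ v ∈ A, ω v ≤ ((f v).len : ℝ)) ∧
      ∀ v₁ ∈ A, ∀ v₂ ∈ A, v₁ ≠ v₂ → (f v₁).b ≤ (f v₂).a ∨ (f v₂).b ≤ (f v₁).a by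
    obtain ⟨f, h1, h2⟩ := h
    refine ⟨f, fun v hv => h1 v hv, fun v₁ h₁ v₂ h₂ hne hint _ _ _ => ?_⟩
    exact absurd (h2 v₁ h₁ v₂ h₂ hne) (inter_nonempty_iff.mp hint)
  classical
  induction A using Finset.induction_on with
  | empty => exact ⟨fun _ => ⟨0, 1, one_pos⟩, by simp, by simp⟩
  | @insert a s ha ih =>
    obtain ⟨f, h1, h2⟩ := ih
    set n := supE s f with hn
    have hpos : 0 < 2 ^ (k a) := Nat.pow_pos (by norm_num)
    set g := Function.update f a ⟨n, n + 2 ^ (k a), by omega⟩ with hg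
    have hga : g a = ⟨n, n + 2 ^ (k a), by omega⟩ := Function.update_self _ _ _
    have hgs : ∀ v ∈ s, g v = f v := fun v hv =>
      Function.update_of_ne (by rintro rfl; exact ha hv) _ _
    have hbound : ∀ v ∈ s, (f v).b ≤ n := fun v hv => Finset.le_sup (f := fun v => (f v).b) hv
    refine ⟨g, ?_, ?_⟩
    · intro v hv
      rcases Finset.mem_insert.mp hv with hva | hv
      · rw [hva, hga]
        have : ((⟨n, n + 2 ^ (k a), by omega⟩ : HInterval).len) = 2 ^ (k a) := by
          simp [HInterval.len]
        rw [this, cast_two_pow hωk]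
      · rw [hgs v hv]; exact h1 v hv
    · intro v₁ h₁ v₂ h₂ hne
      rcases Finset.mem_insert.mp h₁ with hva | h₁
      · rcases Finset.mem_insert.mp h₂ with hvb | h₂
        · exact absurd (hva.trans hvb.symm) hne
        · right; rw [hva, hga, hgs v₂ h₂]; exact hbound v₂ h₂
      · rcases Finset.mem_insert.mp h₂ with hvb | h₂
        · left; rw [hvb, hga, hgs v₁ h₁]; exact hbound v₁ h₁
        · rw [hgs v₁ h₁, hgs v₂ h₂]; exact h2 v₁ h₁ v₂ h₂ hne

lemma OPT_attained (hωk : ∀ v, ω v = (2:ℝ) ^ (k v)) (A : Finset V) :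
    ∃ f, IsESFOn G ω f ↑A ∧ supE A f = OPT G ω A := by
  have := Nat.sInf_mem (s := {n | ∃ f, IsESFOn G ω f ↑A ∧ supE A f = n})
    ⟨supE A (exists_esf hωk A).choose, (exists_esf hωk A).choose, (exists_esf hωk A).choose_spec, rfl⟩
  exact this

lemma OPT_le {A : Finset V} {f : V → HInterval} (hf : IsESFOn G ω f ↑A) :
    OPT G ω A ≤ supE A f :=
  Nat.sInf_le ⟨f, hf, rfl⟩

lemma esf_mono {A B : Finset V} {f : V → HInterval} (hBA : B ⊆ A)
    (h : IsESFOn G ω f ↑A) : IsESFOn G ω f ↑B := by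
  refine ⟨fun v hv => h.1 v (hBA hv), fun v₁ h₁ v₂ h₂ hne hint p hp hsup => ?_⟩
  exact h.2 v₁ (hBA h₁) v₂ (hBA h₂) hne hint p hp (fun x hx => hBA (hsup x hx))

lemma supE_mono {A B : Finset V} (hBA : B ⊆ A) (f : V → HInterval) :
    supE B f ≤ supE A f := Finset.sup_mono hBA

lemma OPT_mono (hωk : ∀ v, ω v = (2:ℝ) ^ (k v)) {A B : Finset V} (hBA : B ⊆ A) :
    OPT G ω B ≤ OPT G ω A := by
  obtain ⟨f, hf, hsup⟩ := OPT_attained hωk A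
  exact le_trans (OPT_le (esf_mono hBA hf)) (le_of_le_of_eq (supE_mono hBA f) hsup)

end ESF

section TreeESF

variable {G : SimpleGraph V}

/-- `A` is closed under taking paths between its members. -/
def SubT (hG : G.IsTree) (A : Finset V) : Prop :=
  ∀ x ∈ A, ∀ y ∈ A, ∀ z ∈ (pth hG x y).support, z ∈ A

/-- `a` is a down-monotone root for `A`. -/
def DMrt (hG : G.IsTree) (ω : V → ℝ) (a : V) (A : Finset V) : Prop :=
  a ∈ A ∧ ∀ y ∈ A, ∀ z ∈ (pth hG a y).support, ω z ≤ ω y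

/-- the component of `A − u` containing `x`. -/
noncomputable def CompOf (hG : G.IsTree) (A : Finset V) (u x : V) : Finset V :=
  A.filter fun y => u ∉ (pth hG x y).support

noncomputable def Mx (hG : G.IsTree) (G' : SimpleGraph V) (ω : V → ℝ) (A : Finset V) (u : V) : ℕ :=
  (A.erase u).sup fun x => OPT G' ω (CompOf hG A u x)

variable {hG : G.IsTree} {ω : V → ℝ} {k : V → ℕ}

lemma mem_CompOf {A : Finset V} {u x y : V} :
    y ∈ CompOf hG A u x ↔ y ∈ A ∧ u ∉ (pth hG x y).support := Finset.mem_filter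

lemma CompOf_subset {A : Finset V} {u x : V} : CompOf hG A u x ⊆ A :=
  Finset.filter_subset _ _

lemma not_mem_CompOf_self {A : Finset V} {u x : V} : u ∉ CompOf hG A u x :=
  fun h => (mem_CompOf.mp h).2 (end_mem_pth hG x u)

lemma self_mem_CompOf {A : Finset V} {u y : V} (hy : y ∈ A) (hne : y ≠ u) :
    y ∈ CompOf hG A u y :=
  mem_CompOf.mpr ⟨hy, fun h => hne ((mem_pth_self hG).mp h).symm⟩

lemma CompOf_card_lt {A : Finset V} {u x : V} (hu : u ∈ A) :
    (CompOf hG A u x).card < A.card :=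
  Finset.card_lt_card (((Finset.ssubset_iff_of_subset CompOf_subset)).mpr
    ⟨u, hu, not_mem_CompOf_self⟩)

lemma CompOf_eq {A : Finset V} {u x y : V} (hy : y ∈ CompOf hG A u x) :
    CompOf hG A u y = CompOf hG A u x := by
  obtain ⟨hyA, hyx⟩ := mem_CompOf.mp hy
  ext z
  simp only [mem_CompOf]
  constructor
  · rintro ⟨hzA, hzy⟩
    refine ⟨hzA, fun hmem => ?_⟩
    rcases mem_pth_triangle hG y hmem with h | h
    · exact hyx h
    · exact hzy h
  · rintro ⟨hzA, hzx⟩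
    refine ⟨hzA, fun hmem => ?_⟩
    rcases mem_pth_triangle hG x hmem with h | h
    · exact hyx (mem_pth_symm hG h)
    · exact hzx h

lemma CompOf_subT {A : Finset V} {u x : V} (hA : SubT hG A) :
    SubT hG (CompOf hG A u x) := by
  intro y hy z hz w hw
  obtain ⟨hyA, hyx⟩ := mem_CompOf.mp hy
  obtain ⟨hzA, hzx⟩ := mem_CompOf.mp hz
  have hyz : u ∉ (pth hG y z).support := fun hmem => by
    rcases mem_pth_triangle hG x hmem with h | h
    · exact hyx (mem_pth_symm hG h)
    · exact hzx h
  refine mem_CompOf.mpr ⟨hA y hyA z hzA w hw, fun hmem => ?_⟩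
  rcases mem_pth_triangle hG y hmem with h | h
  · exact hyx h
  · exact hyz (mem_pth_left hG hw h)

/-- every vertex in a component not containing the root has the removed vertex on its
root path -/
lemma comp_root_sep {A : Finset V} {u x a v : V} (ha : a ∉ CompOf hG A u x) (haA : a ∈ A)
    (hv : v ∈ CompOf hG A u x) : u ∈ (pth hG a v).support := by
  obtain ⟨hvA, hvx⟩ := mem_CompOf.mp hv
  by_contra hmem
  apply ha
  refine mem_CompOf.mpr ⟨haA, fun h => ?_⟩
  rcases mem_pth_triangle hG v h with h' | h'
  · exact hvx h'
  · exact hmem (mem_pth_symm hG h')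

/-- down-monotonicity passes to components -/
lemma DM_comp {A : Finset V} {u x a : V} (hA : SubT hG A) (hDM : DMrt hG ω a A)
    (huA : u ∈ A) (hx : x ∈ CompOf hG A u x) :
    ∃ c, DMrt hG ω c (CompOf hG A u x) := by
  obtain ⟨haA, hroot⟩ := hDM
  by_cases haC : a ∈ CompOf hG A u x
  · refine ⟨a, haC, fun y hy z hz => ?_⟩
    exact hroot y (CompOf_subset hy) z hz
  · -- the component does not contain the root; use the neighbour of u inside it
    have hxu : x ≠ u := fun h => not_mem_CompOf_self (h ▸ hx)
    have hupx : u ∈ (pth hG a x).support := comp_root_sep haC haA hx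
    obtain ⟨c, hadj, hcx, hcsub⟩ := exists_second_vertex hG (Ne.symm hxu)
    have hcA : c ∈ A := by
      apply hA a haA x (CompOf_subset hx)
      exact mem_pth_right hG hupx (hcsub c (start_mem_pth hG c x))
    have hcC : c ∈ CompOf hG A u x :=
      mem_CompOf.mpr ⟨hcA, fun h => hcx (mem_pth_symm hG h)⟩
    refine ⟨c, hcC, fun y hy z hz => ?_⟩
    -- pth c y sits inside the component, so u ∉ it; hence pth u y = cons (pth c y)
    have hpcy : u ∉ (pth hG c y).support := fun h =>
      not_mem_CompOf_self (CompOf_subT hA c hcC y hy u h)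
    have hcons := pth_cons hG hadj hpcy
    have hzy : z ∈ (pth hG u y).support := by
      rw [hcons, SimpleGraph.Walk.support_cons]
      exact List.mem_cons_of_mem _ hz
    have huay : u ∈ (pth hG a y).support := comp_root_sep haC haA hy
    exact hroot y (CompOf_subset hy) z (mem_pth_right hG huay hzy)

lemma two_pow_pos (m : ℕ) : 0 < 2 ^ m := Nat.pow_pos (by norm_num)

/-- R2: lower bound via the top vertex -/
lemma lower_bound (hωk : ∀ v, ω v = (2:ℝ) ^ (k v)) {A : Finset V} {f : V → HInterval} {u : V}
    (hA : SubT hG A) (hf : IsESFOn G ω f ↑A) (hu : u ∈ A)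
    (htop : ∀ x ∈ A, (f x).b ≤ (f u).b) :
    Mx hG G ω A u + 2 ^ (k u) ≤ supE A f := by
  have hWu : (f u).a + 2 ^ (k u) ≤ (f u).b := len_ge hωk (hf.1 u (Finset.mem_coe.mpr hu))
  have hdisj : ∀ x ∈ A, x ≠ u → (f x).b ≤ (f u).a := by
    intro x hx hne
    by_contra hgt
    have hxb := (f x).hab
    have hint : ((f x).toSet ∩ (f u).toSet).Nonempty := by
      apply inter_nonempty_iff.mpr
      have := htop x hx
      omega
    obtain ⟨v₃, hv₃, hGt⟩ := hf.2 x (Finset.mem_coe.mpr hx) u (Finset.mem_coe.mpr hu) hne hint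
      (pth hG x u) (pth_isPath hG x u)
      (fun z hz => Finset.mem_coe.mpr (hA x hx u hu z hz))
    have hv₃A : v₃ ∈ A := hA x hx u hu v₃ hv₃
    have h1 : (f u).b ≤ (f v₃).a := hGt.2
    have h2 : (f v₃).b ≤ (f u).b := htop v₃ hv₃A
    have := (f v₃).hab
    omega
  have hcomp : ∀ x ∈ A.erase u, OPT G ω (CompOf hG A u x) ≤ (f u).a := by
    intro x hx
    refine le_trans (OPT_le (esf_mono CompOf_subset hf)) (Finset.sup_le ?_)
    intro y hy
    exact hdisj y (CompOf_subset hy) (fun h => not_mem_CompOf_self (h ▸ hy))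
  have hMx : Mx hG G ω A u ≤ (f u).a := Finset.sup_le hcomp
  have hsup : (f u).b ≤ supE A f := Finset.le_sup (f := fun v => (f v).b) hu
  omega

/-- combine component strategies below `u` -/
lemma combine (hωk : ∀ v, ω v = (2:ℝ) ^ (k v)) {A : Finset V} {u : V}
    (hA : SubT hG A) (hu : u ∈ A) (t : ℕ) (F : Finset V → V → HInterval)
    (hF1 : ∀ x ∈ A.erase u, IsESFOn G ω (F (CompOf hG A u x)) ↑(CompOf hG A u x))
    (hF2 : ∀ x ∈ A.erase u, supE (CompOf hG A u x) (F (CompOf hG A u x)) ≤ t) :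
    ∃ f, IsESFOn G ω f ↑A ∧ supE A f = t + 2 ^ (k u) ∧
      (f u).a = t ∧ (f u).b = t + 2 ^ (k u) ∧
      ∀ y, y ≠ u → f y = F (CompOf hG A u y) y := by
  classical
  have hpos : 0 < 2 ^ (k u) := two_pow_pos _
  set I : HInterval := ⟨t, t + 2 ^ (k u), by omega⟩ with hI
  set f : V → HInterval := fun y => if y = u then I else F (CompOf hG A u y) y with hfdef
  have hfu : f u = I := by simp [hfdef]
  have hfy : ∀ y, y ≠ u → f y = F (CompOf hG A u y) y := by
    intro y hy; simp [hfdef, hy]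
  have hb_le : ∀ y ∈ A, y ≠ u → (f y).b ≤ t := by
    intro y hy hne
    rw [hfy y hne]
    have hyc : y ∈ CompOf hG A u y := self_mem_CompOf hy hne
    have hye : y ∈ A.erase u := Finset.mem_erase.mpr ⟨hne, hy⟩
    calc (F (CompOf hG A u y) y).b
        ≤ supE (CompOf hG A u y) (F (CompOf hG A u y)) :=
          Finset.le_sup (f := fun v => (F (CompOf hG A u y) v).b) hyc
      _ ≤ t := hF2 y hye
  refine ⟨f, ⟨?_, ?_⟩, ?_, by rw [hfu], by rw [hfu], hfy⟩
  · -- lengths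
    intro v hv
    by_cases hvu : v = u
    · subst hvu
      rw [hfu]
      have : I.len = 2 ^ (k v) := by simp [hI, HInterval.len]
      rw [this, cast_two_pow hωk]
    · have hvA : v ∈ A := Finset.mem_coe.mp hv
      rw [hfy v hvu]
      exact (hF1 v (Finset.mem_erase.mpr ⟨hvu, hvA⟩)).1 v
        (Finset.mem_coe.mpr (self_mem_CompOf hvA hvu))
  · -- pair condition
    intro v₁ h₁ v₂ h₂ hne hint p hp hsup
    have h₁A : v₁ ∈ A := Finset.mem_coe.mp h₁
    have h₂A : v₂ ∈ A := Finset.mem_coe.mp h₂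
    have hpeq : p = pth hG v₁ v₂ := pth_eq hG p hp
    by_cases h1u : v₁ = u
    · subst h1u
      exfalso
      have := hb_le v₂ h₂A (Ne.symm hne)
      have h1 := inter_nonempty_iff.mp hint
      rw [hfu] at h1
      simp only [hI] at h1
      omega
    by_cases h2u : v₂ = u
    · subst h2u
      exfalso
      have := hb_le v₁ h₁A hne
      have h1 := inter_nonempty_iff.mp hint
      rw [hfu] at h1
      simp only [hI] at h1
      omega
    by_cases hmem : u ∈ (pth hG v₁ v₂).support
    · refine ⟨u, by rw [hpeq]; exact hmem, ?_⟩
      constructor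
      · rw [hfu]; exact hb_le v₁ h₁A h1u
      · rw [hfu]; exact hb_le v₂ h₂A h2u
    · -- v₁ and v₂ are in the same component
      have h₁B : v₁ ∈ CompOf hG A u v₁ := self_mem_CompOf h₁A h1u
      have h₂B : v₂ ∈ CompOf hG A u v₁ := mem_CompOf.mpr ⟨h₂A, hmem⟩
      have hsupB : ∀ z ∈ p.support, z ∈ CompOf hG A u v₁ := by
        intro z hz
        rw [hpeq] at hz
        have hzA : z ∈ A := hA v₁ h₁A v₂ h₂A z hz
        refine mem_CompOf.mpr ⟨hzA, fun h => hmem (mem_pth_left hG hz h)⟩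
      have hint' : ((F (CompOf hG A u v₁) v₁).toSet ∩ (F (CompOf hG A u v₁) v₂).toSet).Nonempty := by
        rw [← hfy v₁ h1u, ← CompOf_eq h₂B, ← hfy v₂ h2u]
        exact hint
      obtain ⟨v₃, hv₃p, hGt⟩ := (hF1 v₁ (Finset.mem_erase.mpr ⟨h1u, h₁A⟩)).2
        v₁ (Finset.mem_coe.mpr h₁B) v₂ (Finset.mem_coe.mpr h₂B) hne hint' p hp
        (fun z hz => Finset.mem_coe.mpr (hsupB z hz))
      have hv₃B : v₃ ∈ CompOf hG A u v₁ := hsupB v₃ hv₃p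
      have hv₃u : v₃ ≠ u := fun h => not_mem_CompOf_self (h ▸ hv₃B)
      refine ⟨v₃, hv₃p, ?_⟩
      rw [hfy v₃ hv₃u, CompOf_eq hv₃B, hfy v₁ h1u, hfy v₂ h2u, CompOf_eq h₂B]
      exact hGt
  · -- supE computation
    apply le_antisymm
    · apply Finset.sup_le
      intro y hy
      by_cases hyu : y = u
      · subst hyu; rw [hfu]
      · have := hb_le y hy hyu
        omega
    · have : (f u).b = t + 2 ^ (k u) := by rw [hfu]
      rw [← this]
      exact Finset.le_sup (f := fun v => (f v).b) hu

/-- R1: upper bound by combining optimal component strategies -/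
lemma upper_bound (hωk : ∀ v, ω v = (2:ℝ) ^ (k v)) {A : Finset V} {u : V}
    (hA : SubT hG A) (hu : u ∈ A) :
    OPT G ω A ≤ Mx hG G ω A u + 2 ^ (k u) := by
  classical
  set F : Finset V → V → HInterval := fun B => (OPT_attained (G := G) hωk B).choose with hF
  have hF1 : ∀ x ∈ A.erase u, IsESFOn G ω (F (CompOf hG A u x)) ↑(CompOf hG A u x) :=
    fun x _ => (OPT_attained hωk (CompOf hG A u x)).choose_spec.1
  have hF2 : ∀ x ∈ A.erase u,
      supE (CompOf hG A u x) (F (CompOf hG A u x)) ≤ Mx hG G ω A u := by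
    intro x hx
    rw [(OPT_attained hωk (CompOf hG A u x)).choose_spec.2]
    exact Finset.le_sup (f := fun x => OPT G ω (CompOf hG A u x)) hx
  obtain ⟨f, hf, hsup, _⟩ := combine hωk hA hu (Mx hG G ω A u) F hF1 hF2
  exact le_trans (OPT_le hf) (le_of_eq hsup)

end TreeESF

section MainInduction

variable {G : SimpleGraph V} {hG : G.IsTree} {ω : V → ℝ} {k : V → ℕ}

lemma arith1 {w w₁ m nB : ℕ} (hw₁ : 0 < w₁) (hw : 0 < w) (h1 : w₁ ∣ w) (h2 : w₁ ∣ m)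
    (h3 : ¬ w ∣ m) (h4 : w ∣ nB) (h5 : nB ≤ m) : nB + w₁ ≤ m := by
  have hdm := Nat.div_add_mod m w
  have hsub : m % w = m - w * (m / w) := by omega
  have hmod : w₁ ∣ m % w := by
    rw [hsub]
    exact Nat.dvd_sub h2 (Dvd.dvd.mul_right h1 (m / w))
  have hmodne : m % w ≠ 0 := fun h => h3 (Nat.dvd_of_mod_eq_zero h)
  have hge : w₁ ≤ m % w := Nat.le_of_dvd (Nat.pos_of_ne_zero hmodne) hmod
  obtain ⟨q, rfl⟩ := h4
  have hq : q ≤ m / w := by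
    rw [Nat.le_div_iff_mul_le hw, mul_comm]
    exact h5
  have h6 : w * q ≤ w * (m / w) := Nat.mul_le_mul_left _ hq
  omega

lemma k_le_of_ω_le (hωk : ∀ v, ω v = (2:ℝ) ^ (k v)) {u v : V} (h : ω u ≤ ω v) :
    k u ≤ k v := by
  rw [hωk, hωk] at h
  exact (pow_le_pow_iff_right₀ one_lt_two).mp h

theorem main_induction (hωk : ∀ v, ω v = (2:ℝ) ^ (k v)) :
    ∀ n (A : Finset V), A.card ≤ n → SubT hG A → A.Nonempty → (∃ a, DMrt hG ω a A) →
      (∃ u ∈ A, OPT G ω A = Mx hG G ω A u + 2 ^ (k u) ∧ 2 ^ (k u) ∣ Mx hG G ω A u) ∧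
      (∀ d, (∀ v ∈ A, d ≤ k v) → 2 ^ d ∣ OPT G ω A) ∧
      (∃ f, IsESFOn G ω f ↑A ∧ (∀ v ∈ A, AlignedAt ω f v) ∧ supE A f = OPT G ω A) := by
  intro n
  induction n with
  | zero =>
    intro A hcard hA hne _
    rw [Nat.le_zero, Finset.card_eq_zero] at hcard
    exact absurd hcard (Finset.nonempty_iff_ne_empty.mp hne)
  | succ n IH =>
    intro A hcard hA hne hDM
    classical
    obtain ⟨a, haA, hroot⟩ := hDM
    -- IH applied to a component of A − u
    have IHcomp : ∀ u x, u ∈ A → x ∈ A → x ≠ u →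
        (∃ u' ∈ CompOf hG A u x, OPT G ω (CompOf hG A u x) =
            Mx hG G ω (CompOf hG A u x) u' + 2 ^ (k u') ∧
            2 ^ (k u') ∣ Mx hG G ω (CompOf hG A u x) u') ∧
        (∀ d, (∀ v ∈ CompOf hG A u x, d ≤ k v) → 2 ^ d ∣ OPT G ω (CompOf hG A u x)) ∧
        (∃ f, IsESFOn G ω f ↑(CompOf hG A u x) ∧
          (∀ v ∈ CompOf hG A u x, AlignedAt ω f v) ∧
          supE (CompOf hG A u x) f = OPT G ω (CompOf hG A u x)) := by
      intro u x huA hxA hxu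
      have hxC : x ∈ CompOf hG A u x := self_mem_CompOf hxA hxu
      have hlt : (CompOf hG A u x).card < A.card := CompOf_card_lt huA
      exact IH (CompOf hG A u x) (by omega) (CompOf_subT hA) ⟨x, hxC⟩
        (DM_comp hA ⟨haA, hroot⟩ huA hxC)
    -- weights in components separated from the root `a` are ≥ ω u
    have hksep : ∀ u x, u ∈ A → (∀ v ∈ CompOf hG A u x, u ∈ (pth hG a v).support) →
        ∀ v ∈ CompOf hG A u x, k u ≤ k v := by
      intro u x huA hsep v hv
      exact k_le_of_ω_le hωk (hroot v (CompOf_subset hv) u (hsep v hv))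
    -- Step A : a good top vertex exists
    obtain ⟨g₀, hg₀, hg₀sup⟩ := OPT_attained (G := G) hωk A
    obtain ⟨u, huA, hub⟩ := Finset.exists_mem_eq_sup A hne (fun v => (g₀ v).b)
    have htop : ∀ x ∈ A, (g₀ x).b ≤ (g₀ u).b := by
      intro x hx
      rw [← hub]
      exact Finset.le_sup (f := fun v => (g₀ v).b) hx
    have hge : Mx hG G ω A u + 2 ^ (k u) ≤ OPT G ω A := by
      rw [← hg₀sup]
      exact lower_bound hωk hA hg₀ huA htop
    have hOPTu : OPT G ω A = Mx hG G ω A u + 2 ^ (k u) :=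
      le_antisymm (upper_bound hωk hA huA) hge
    have hM3 : ∃ u' ∈ A, OPT G ω A = Mx hG G ω A u' + 2 ^ (k u') ∧
        2 ^ (k u') ∣ Mx hG G ω A u' := by
      by_cases hdvd : 2 ^ (k u) ∣ Mx hG G ω A u
      · exact ⟨u, huA, hOPTu, hdvd⟩
      · -- the hard case
        have hMxne : Mx hG G ω A u ≠ 0 := fun h => hdvd (h ▸ dvd_zero _)
        have hMx_attain : ∃ xh ∈ A.erase u,
            Mx hG G ω A u = OPT G ω (CompOf hG A u xh) := by
          rcases Finset.eq_empty_or_nonempty (A.erase u) with he | hne'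
          · exfalso; apply hMxne
            unfold Mx; rw [he, Finset.sup_empty]; rfl
          · exact Finset.exists_mem_eq_sup _ hne' (fun x => OPT G ω (CompOf hG A u x))
        obtain ⟨xh, hxh, hMxEq⟩ := hMx_attain
        obtain ⟨hxhu, hxhA⟩ := Finset.mem_erase.mp hxh
        -- the component attaining Mx must contain the root a, and u ≠ a
        have hdvd_of_sep : ∀ x ∈ A.erase u,
            (∀ v ∈ CompOf hG A u x, u ∈ (pth hG a v).support) →
            2 ^ (k u) ∣ OPT G ω (CompOf hG A u x) := by
          intro x hx hsep
          obtain ⟨hxu, hxA⟩ := Finset.mem_erase.mp hx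
          exact (IHcomp u x huA hxA hxu).2.1 (k u) (hksep u x huA hsep)
        have hua : u ≠ a := by
          rintro rfl
          exact hdvd (hMxEq ▸ hdvd_of_sep xh hxh (fun v _ => start_mem_pth hG u v))
        have haC : a ∈ CompOf hG A u xh := by
          by_contra hax
          exact hdvd (hMxEq ▸ hdvd_of_sep xh hxh (fun v hv => comp_root_sep hax haA hv))
        have hC0eq : CompOf hG A u a = CompOf hG A u xh := CompOf_eq haC
        have hMxC0 : Mx hG G ω A u = OPT G ω (CompOf hG A u a) := by rw [hMxEq, hC0eq]
        have haC₀ : a ∈ CompOf hG A u a := self_mem_CompOf haA (Ne.symm hua)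
        obtain ⟨⟨u₁, hu₁C₀, hOPTC₀, hdvd₁⟩, hM2C₀, _⟩ := IHcomp u a huA haA (Ne.symm hua)
        have hu₁A : u₁ ∈ A := CompOf_subset hu₁C₀
        have hu₁u : u₁ ≠ u := fun h => not_mem_CompOf_self (h ▸ hu₁C₀)
        have hu₁pth : u ∉ (pth hG a u₁).support := (mem_CompOf.mp hu₁C₀).2
        have hdvdMx : 2 ^ (k u₁) ∣ Mx hG G ω A u := by
          rw [hMxC0, hOPTC₀]
          exact dvd_add hdvd₁ dvd_rfl
        have hk1 : k u₁ < k u := by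
          by_contra hge'
          push_neg at hge'
          exact hdvd (dvd_trans (pow_dvd_pow 2 hge') hdvdMx)
        have hW1W : (2:ℕ) ^ (k u₁) ∣ 2 ^ (k u) := pow_dvd_pow 2 (le_of_lt hk1)
        have hW1Mx : (2:ℕ) ^ (k u₁) ≤ Mx hG G ω A u :=
          Nat.le_of_dvd (Nat.pos_of_ne_zero hMxne) hdvdMx
        have hMsum : Mx hG G ω (CompOf hG A u a) u₁ + 2 ^ (k u₁) = Mx hG G ω A u := by
          rw [hMxC0, hOPTC₀]
        -- key bound on all components of A − u₁
        have hkey : ∀ y ∈ A.erase u₁,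
            OPT G ω (CompOf hG A u₁ y) + 2 ^ (k u₁) ≤ Mx hG G ω A u + 2 ^ (k u) := by
          intro y hy
          obtain ⟨hyu₁, hyA⟩ := Finset.mem_erase.mp hy
          by_cases hyD : u₁ ∈ (pth hG u y).support
          · -- CASE 1 : y on the far side of u₁ from u, hence y ∈ C₀
            have hyC₀ : u ∉ (pth hG a y).support := by
              intro hy'
              have h1 : u₁ ∈ (pth hG a y).support := mem_pth_right hG hy' hyD
              have h3 : u ∈ (pth hG u₁ y).support :=
                (mem_pth_split hG h1 hy').resolve_left (fun h => hu₁pth h)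
              exact no_cross hG (Ne.symm hu₁u) hyD h3
            have hsubset : CompOf hG A u₁ y ⊆ CompOf hG (CompOf hG A u a) u₁ y := by
              intro z hz
              obtain ⟨hzA, hzy⟩ := mem_CompOf.mp hz
              have hzu : u ∉ (pth hG y z).support := by
                intro hu'
                exact hzy (mem_pth_left hG hu' (mem_pth_symm hG hyD))
              have hzC₀ : u ∉ (pth hG a z).support := by
                intro h
                rcases mem_pth_triangle hG y h with h' | h'
                · exact hyC₀ h'
                · exact hzu h'
              exact mem_CompOf.mpr ⟨mem_CompOf.mpr ⟨hzA, hzC₀⟩, hzy⟩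
            have hyC₀' : y ∈ (CompOf hG A u a).erase u₁ :=
              Finset.mem_erase.mpr ⟨hyu₁, mem_CompOf.mpr ⟨hyA, hyC₀⟩⟩
            have hb : OPT G ω (CompOf hG A u₁ y) ≤ Mx hG G ω (CompOf hG A u a) u₁ :=
              le_trans (OPT_mono hωk hsubset)
                (Finset.le_sup (f := fun x => OPT G ω (CompOf hG (CompOf hG A u a) u₁ x)) hyC₀')
            omega
          · -- CASE 2 : the component of y contains u
            have hyu' : u₁ ∉ (pth hG y u).support := fun h => hyD (mem_pth_symm hG h)
            have huCy : u ∈ CompOf hG A u₁ y := mem_CompOf.mpr ⟨huA, hyu'⟩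
            have hCySubT : SubT hG (CompOf hG A u₁ y) := CompOf_subT hA
            have hCyub := upper_bound (G := G) hωk hCySubT huCy
            -- bound every component of Cy − u
            have hMxCy : ∀ x ∈ (CompOf hG A u₁ y).erase u,
                OPT G ω (CompOf hG (CompOf hG A u₁ y) u x) + 2 ^ (k u₁) ≤
                  Mx hG G ω A u := by
              intro x hx
              obtain ⟨hxu', hxCy⟩ := Finset.mem_erase.mp hx
              obtain ⟨hxA', hxy⟩ := mem_CompOf.mp hxCy
              have hu₁ux : u₁ ∉ (pth hG u x).support := by
                intro h
                rcases mem_pth_triangle hG y h with h' | h'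
                · exact hyD h'
                · exact hxy h'
              by_cases hxC₀ : u ∈ (pth hG a x).support
              · -- x is separated from a by u : divisibility argument
                have hsubB : CompOf hG (CompOf hG A u₁ y) u x ⊆ CompOf hG A u x := by
                  intro z hz
                  obtain ⟨hzCy, hzx⟩ := mem_CompOf.mp hz
                  exact mem_CompOf.mpr ⟨CompOf_subset hzCy, hzx⟩
                have hanotin : a ∉ CompOf hG A u x := by
                  intro h
                  exact (mem_CompOf.mp h).2 (mem_pth_symm hG hxC₀)
                have hkbound : ∀ v ∈ CompOf hG (CompOf hG A u₁ y) u x, k u ≤ k v := by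
                  intro v hv
                  have hvAx : v ∈ CompOf hG A u x := hsubB hv
                  exact k_le_of_ω_le hωk
                    (hroot v (CompOf_subset hvAx) u (comp_root_sep hanotin haA hvAx))
                -- IH on this sub-component
                obtain ⟨a', hDMCy⟩ := DM_comp hA ⟨haA, hroot⟩ hu₁A
                  (self_mem_CompOf hyA hyu₁)
                have hxCy' : x ∈ CompOf hG (CompOf hG A u₁ y) u x :=
                  self_mem_CompOf hxCy hxu'
                have hcard2 : (CompOf hG (CompOf hG A u₁ y) u x).card ≤ n := by
                  have l1 : (CompOf hG (CompOf hG A u₁ y) u x).card <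
                      (CompOf hG A u₁ y).card := CompOf_card_lt huCy
                  have l2 : (CompOf hG A u₁ y).card < A.card := CompOf_card_lt hu₁A
                  omega
                have hdvdB := (IH (CompOf hG (CompOf hG A u₁ y) u x) hcard2
                  (CompOf_subT hCySubT) ⟨x, hxCy'⟩
                  (DM_comp hCySubT hDMCy huCy hxCy')).2.1 (k u) hkbound
                have hBle : OPT G ω (CompOf hG (CompOf hG A u₁ y) u x) ≤ Mx hG G ω A u :=
                  le_trans (OPT_mono hωk hsubB)
                    (Finset.le_sup (f := fun x => OPT G ω (CompOf hG A u x))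
                      (Finset.mem_erase.mpr ⟨hxu', hxA'⟩))
                exact arith1 (two_pow_pos _) (two_pow_pos _) hW1W hdvdMx hdvd hdvdB hBle
              · -- x ∈ C₀ : compare with the corresponding component of C₀ − u₁
                have hxC₀mem : x ∈ CompOf hG A u a := mem_CompOf.mpr ⟨hxA', hxC₀⟩
                have hxu₁ : x ≠ u₁ := fun h => not_mem_CompOf_self (h ▸ hxCy)
                have hsubB : CompOf hG (CompOf hG A u₁ y) u x ⊆
                    CompOf hG (CompOf hG A u a) u₁ x := by
                  intro z hz
                  obtain ⟨hzCy, hzx⟩ := mem_CompOf.mp hz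
                  obtain ⟨hzA, hzy⟩ := mem_CompOf.mp hzCy
                  have hu₁uz : u₁ ∉ (pth hG u z).support := by
                    intro h
                    rcases mem_pth_triangle hG y h with h' | h'
                    · exact hyD h'
                    · exact hzy h'
                  have hu₁xz : u₁ ∉ (pth hG x z).support := by
                    intro h
                    rcases mem_pth_triangle hG u h with h' | h'
                    · exact hu₁ux (mem_pth_symm hG h')
                    · exact hu₁uz h'
                  have hzC₀ : u ∉ (pth hG a z).support := by
                    intro h
                    rcases mem_pth_triangle hG x h with h' | h'
                    · exact hxC₀ h'
                    · exact hzx h'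
                  exact mem_CompOf.mpr ⟨mem_CompOf.mpr ⟨hzA, hzC₀⟩, hu₁xz⟩
                have hb : OPT G ω (CompOf hG (CompOf hG A u₁ y) u x) ≤
                    Mx hG G ω (CompOf hG A u a) u₁ :=
                  le_trans (OPT_mono hωk hsubB)
                    (Finset.le_sup (f := fun x => OPT G ω (CompOf hG (CompOf hG A u a) u₁ x))
                      (Finset.mem_erase.mpr ⟨hxu₁, hxC₀mem⟩))
                omega
            have hMxCy' : Mx hG G ω (CompOf hG A u₁ y) u + 2 ^ (k u₁) ≤ Mx hG G ω A u := by
              rcases Finset.eq_empty_or_nonempty ((CompOf hG A u₁ y).erase u) with he | hne'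
              · have : Mx hG G ω (CompOf hG A u₁ y) u = 0 := by
                  unfold Mx; rw [he, Finset.sup_empty]; rfl
                omega
              · obtain ⟨xm, hxm, hxmEq⟩ := Finset.exists_mem_eq_sup _ hne'
                  (fun x => OPT G ω (CompOf hG (CompOf hG A u₁ y) u x))
                have hxmEq' : Mx hG G ω (CompOf hG A u₁ y) u =
                    OPT G ω (CompOf hG (CompOf hG A u₁ y) u xm) := hxmEq
                have := hMxCy xm hxm
                omega
            omega
        -- conclude : u₁ is a good top vertex
        have hle₁ := upper_bound (G := G) hωk hA hu₁A
        have hMxu₁ : Mx hG G ω A u₁ + 2 ^ (k u₁) ≤ Mx hG G ω A u + 2 ^ (k u) := by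
          rcases Finset.eq_empty_or_nonempty (A.erase u₁) with he | hne'
          · have : Mx hG G ω A u₁ = 0 := by
              unfold Mx; rw [he, Finset.sup_empty]; rfl
            have : (2:ℕ) ^ (k u₁) ≤ 2 ^ (k u) := Nat.pow_le_pow_right (by norm_num) (le_of_lt hk1)
            omega
          · obtain ⟨ym, hym, hymEq⟩ := Finset.exists_mem_eq_sup _ hne'
              (fun x => OPT G ω (CompOf hG A u₁ x))
            have hymEq' : Mx hG G ω A u₁ = OPT G ω (CompOf hG A u₁ ym) := hymEq
            have := hkey ym hym
            omega
        have hfinal : OPT G ω A = Mx hG G ω A u₁ + 2 ^ (k u₁) := by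
          omega
        have hdvdfinal : 2 ^ (k u₁) ∣ Mx hG G ω A u₁ := by
          have heq : Mx hG G ω A u₁ + 2 ^ (k u₁) = Mx hG G ω A u + 2 ^ (k u) := by omega
          have hd : (2:ℕ) ^ (k u₁) ∣ Mx hG G ω A u₁ + 2 ^ (k u₁) := by
            rw [heq]; exact dvd_add hdvdMx hW1W
          have := Nat.dvd_sub hd (dvd_refl ((2:ℕ) ^ (k u₁)))
          simpa using this
        exact ⟨u₁, hu₁A, hfinal, hdvdfinal⟩
    -- Step B : divisibility and the aligned optimal strategy
    obtain ⟨us, husA, hOPTs, hdvds⟩ := hM3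
    constructor
    · exact ⟨us, husA, hOPTs, hdvds⟩
    constructor
    · -- M2
      intro d hd
      rw [hOPTs]
      apply dvd_add
      · rcases Finset.eq_empty_or_nonempty (A.erase us) with he | hne'
        · have : Mx hG G ω A us = 0 := by
            unfold Mx; rw [he, Finset.sup_empty]; rfl
          rw [this]; exact dvd_zero _
        · obtain ⟨xm, hxm, hxmEq⟩ := Finset.exists_mem_eq_sup _ hne'
            (fun x => OPT G ω (CompOf hG A us x))
          obtain ⟨hxmu, hxmA⟩ := Finset.mem_erase.mp hxm
          have hxmEq' : Mx hG G ω A us = OPT G ω (CompOf hG A us xm) := hxmEq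
          rw [hxmEq']
          exact (IHcomp us xm husA hxmA hxmu).2.1 d
            (fun v hv => hd v (CompOf_subset hv))
      · exact pow_dvd_pow 2 (hd us husA)
    · -- M1 : aligned optimal strategy
      set F : Finset V → V → HInterval := fun B =>
        if h : B.card ≤ n ∧ SubT hG B ∧ B.Nonempty ∧ (∃ a', DMrt hG ω a' B)
        then (IH B h.1 h.2.1 h.2.2.1 h.2.2.2).2.2.choose
        else fun _ => ⟨0, 1, one_pos⟩ with hFdef
      have hFcond : ∀ x ∈ A.erase us,
          (CompOf hG A us x).card ≤ n ∧ SubT hG (CompOf hG A us x) ∧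
          (CompOf hG A us x).Nonempty ∧ (∃ a', DMrt hG ω a' (CompOf hG A us x)) := by
        intro x hx
        obtain ⟨hxu, hxA⟩ := Finset.mem_erase.mp hx
        have hxC : x ∈ CompOf hG A us x := self_mem_CompOf hxA hxu
        have hlt : (CompOf hG A us x).card < A.card := CompOf_card_lt husA
        exact ⟨by omega, CompOf_subT hA, ⟨x, hxC⟩, DM_comp hA ⟨haA, hroot⟩ husA hxC⟩
      have hFspec : ∀ x ∈ A.erase us,
          IsESFOn G ω (F (CompOf hG A us x)) ↑(CompOf hG A us x) ∧
          (∀ v ∈ CompOf hG A us x, AlignedAt ω (F (CompOf hG A us x)) v) ∧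
          supE (CompOf hG A us x) (F (CompOf hG A us x)) = OPT G ω (CompOf hG A us x) := by
        intro x hx
        have hc := hFcond x hx
        have : F (CompOf hG A us x) =
            (IH (CompOf hG A us x) hc.1 hc.2.1 hc.2.2.1 hc.2.2.2).2.2.choose := by
          rw [hFdef]; exact dif_pos hc
        rw [this]
        exact (IH (CompOf hG A us x) hc.1 hc.2.1 hc.2.2.1 hc.2.2.2).2.2.choose_spec
      have hF1 : ∀ x ∈ A.erase us,
          IsESFOn G ω (F (CompOf hG A us x)) ↑(CompOf hG A us x) :=
        fun x hx => (hFspec x hx).1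
      have hF2 : ∀ x ∈ A.erase us,
          supE (CompOf hG A us x) (F (CompOf hG A us x)) ≤ Mx hG G ω A us := by
        intro x hx
        rw [(hFspec x hx).2.2]
        exact Finset.le_sup (f := fun x => OPT G ω (CompOf hG A us x)) hx
      obtain ⟨f, hf, hsupf, hfa, hfb, hfrest⟩ :=
        combine hωk hA husA (Mx hG G ω A us) F hF1 hF2
      refine ⟨f, hf, ?_, by rw [hsupf, hOPTs]⟩
      intro v hv
      by_cases hvu : v = us
      · subst hvu
        obtain ⟨c, hc⟩ := hdvds
        unfold AlignedAt
        constructor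
        · refine ⟨c, ?_⟩
          rw [hfa, hc, hωk]
          push_cast
          ring
        · refine ⟨c + 1, ?_⟩
          rw [hfb, hc, hωk]
          push_cast
          ring
      · have hvC : v ∈ CompOf hG A us v := self_mem_CompOf hv hvu
        have := (hFspec v (Finset.mem_erase.mpr ⟨hvu, hv⟩)).2.1 v hvC
        unfold AlignedAt at this ⊢
        rw [hfrest v hvu]
        exact this

end MainInduction
end Stmt14Aux

/-- For every tree `T = (V,E,ω)` with a down-monotonic and rounded
cost function, there exists an optimal extended strategy function for `(T,ω)` that is
aligned. -/
theorem stmt14 {V : Type u} [Fintype V] (G : SimpleGraph V) (hG : G.IsTree)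
    (ω : V → ℝ)
    (hdown : ∃ r : V, ∀ u v : V, OnPath G r u v → ω v ≤ ω u)
    (hround : ∀ v, ∃ k : ℕ, ω v = 2 ^ k) :
    ∃ f : V → HInterval, IsOptimalESF G ω f ∧ ∀ v, AlignedAt ω f v := by
  classical
  obtain ⟨r, hr⟩ := hdown
  choose k hk using hround
  have hne' : Nonempty V := hG.isConnected.nonempty
  have huniv_ne : (Finset.univ : Finset V).Nonempty := Finset.univ_nonempty
  have hsubt : Stmt14Aux.SubT hG Finset.univ := fun _ _ _ _ _ _ => Finset.mem_univ _
  have hDM : ∃ a, Stmt14Aux.DMrt hG ω a Finset.univ := by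
    refine ⟨r, Finset.mem_univ r, fun y _ z hz => ?_⟩
    apply hr y z
    intro p hp
    rw [Stmt14Aux.pth_eq hG p hp]
    exact hz
  obtain ⟨_, _, f, hf, halign, hsup⟩ :=
    Stmt14Aux.main_induction (hG := hG) hk (Finset.univ : Finset V).card Finset.univ
      le_rfl hsubt huniv_ne hDM
  refine ⟨f, ⟨⟨fun v => hf.1 v (by simp), fun v₁ v₂ hne hint p hp =>
      hf.2 v₁ (by simp) v₂ (by simp) hne hint p hp (fun x _ => by simp)⟩, ?_⟩,
    fun v => halign v (Finset.mem_univ v)⟩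
  intro g hg
  have hgOn : IsESFOn G ω g ↑(Finset.univ : Finset V) :=
    ⟨fun v _ => hg.1 v, fun v₁ _ v₂ _ hne hint p hp _ => hg.2 v₁ v₂ hne hint p hp⟩
  have h1 : supEnd f = Stmt14Aux.supE Finset.univ f := rfl
  have h2 : supEnd g = Stmt14Aux.supE Finset.univ g := rfl
  rw [h1, hsup]
  exact le_trans (Stmt14Aux.OPT_le hgOn) (le_of_eq h2.symm)
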